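/- Let G be a finite abelian group (written multiplicatively), n ≥ 1, and let S, T, U ⊆ G be subsets of size n with |S⁻¹T| = |T⁻¹U| = |S⁻¹U| = n². Let A ∈ {±1}^{S×T} and B ∈ {±1}^{T×U} have i.i.d. uniform ±1 entries, and let α ∈ {±1}^S, γ ∈ {±1}^T, β ∈ {±1}^U be uniform sign vectors, with A, B, α, β, γ all mutually independent. Define a, b : G → ℝ by a(s⁻¹t) = α_s·γ_t·A_{s,t} for (s,t) ∈ S×T and a = 0 elsewhere, b(t⁻¹u) = γ_t·β_u·B_{t,u} for (t,u) ∈ T×U and b = 0 elsewhere (these are well defined since |S⁻¹T| = |T⁻¹U| = n²). Let c(g) = Σ_{h∈G} a(h)·b(h⁻¹g) and C_{x,y} = α_x·β_y·c(x⁻¹y) for x ∈ S, y ∈ U. Then E[ Σ_{x∈S, y∈U} (C_{x,y} − (AB)_{x,y})² ] = Σ_{x∈S, y∈U} |Err_{x,y}| ≥ ρ_{n,G}(S,T,U) − n³, where (AB)_{x,y} = Σ_{t∈T} A_{x,t}·B_{t,y} and Err_{x,y} = {(s,t,t′,u) ∈ S×T×T×U : t ≠ t′ and s⁻¹tt′⁻¹u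 = x⁻¹y}. Consequently, the normalized expected squared error E[‖C − AB‖_F²] / (‖A‖_F²·‖B‖_F²) is at least (ρ_{n,G}(S,T,U) − n³)/n⁴. -/

import Mathlib

open scoped Pointwise

/-- The sign `±1` associated to a Boolean. -/
noncomputable def sgn (x : Bool) : ℝ := if x then 1 else -1

lemma sgn_mul_self (b : Bool) : sgn b * sgn b = 1 := by cases b <;> simp [sgn]

lemma sgn_sq (b : Bool) : sgn b ^ 2 = 1 := by cases b <;> simp [sgn]

lemma sgn_not (b : Bool) : sgn (!b) = - sgn b := by cases b <;> simp [sgn]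

lemma sum_sgn_pair {I : Type*} [Fintype I] [DecidableEq I] {i j : I} (h : i ≠ j) :
    ∑ f : I → Bool, sgn (f i) * sgn (f j) = 0 := by
  refine Finset.sum_involution (fun f _ => Function.update f i (!(f i)))
    (fun f _ => ?_) (fun f _ hf => ?_) (fun f _ => Finset.mem_univ _) (fun f _ => ?_)
  · rw [Function.update_self, Function.update_of_ne (Ne.symm h), sgn_not]; ring
  · intro hupd
    have := congrFun hupd i
    rw [Function.update_self] at this
    exact (Bool.not_ne_self _) this
  · funext k
    by_cases hk : k = i
    · subst hk; simp
    · simp [Function.update_of_ne hk]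

lemma pair_sum {X Y : Type*} [Fintype X] [Fintype Y] (f : X → ℝ) (g : Y → ℝ) :
    ∑ ω : X × Y, f ω.1 * g ω.2 = (∑ x, f x) * (∑ y, g y) := by
  rw [Fintype.sum_prod_type, ← Finset.sum_mul_sum]

lemma fubini5 {X1 X2 X3 X4 X5 : Type*} [Fintype X1] [Fintype X2] [Fintype X3] [Fintype X4]
    [Fintype X5] (f1 : X1 → ℝ) (f2 : X2 → ℝ) (f3 : X3 → ℝ) (f4 : X4 → ℝ) (f5 : X5 → ℝ) :
    ∑ ω : X1 × X2 × X3 × X4 × X5,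
      f1 ω.1 * f2 ω.2.1 * f3 ω.2.2.1 * f4 ω.2.2.2.1 * f5 ω.2.2.2.2
      = (∑ x, f1 x) * (∑ x, f2 x) * (∑ x, f3 x) * (∑ x, f4 x) * (∑ x, f5 x) := by
  have h2 := pair_sum (fun x : X4 => f4 x) (fun x : X5 => f5 x)
  have h3 := pair_sum (fun x : X3 => f3 x)
    (fun r : X4 × X5 => f4 r.1 * f5 r.2)
  have h4 := pair_sum (fun x : X2 => f2 x)
    (fun r : X3 × X4 × X5 => f3 r.1 * (f4 r.2.1 * f5 r.2.2))
  have h5 := pair_sum (fun x : X1 => f1 x)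
    (fun r : X2 × X3 × X4 × X5 => f2 r.1 * (f3 r.2.1 * (f4 r.2.2.1 * f5 r.2.2.2)))
  calc ∑ ω : X1 × X2 × X3 × X4 × X5,
      f1 ω.1 * f2 ω.2.1 * f3 ω.2.2.1 * f4 ω.2.2.2.1 * f5 ω.2.2.2.2
      = ∑ ω : X1 × X2 × X3 × X4 × X5,
        f1 ω.1 * (f2 ω.2.1 * (f3 ω.2.2.1 * (f4 ω.2.2.2.1 * f5 ω.2.2.2.2))) := by
        apply Finset.sum_congr rfl; intros; ring
    _ = (∑ x, f1 x) * ∑ r : X2 × X3 × X4 × X5, f2 r.1 * (f3 r.2.1 * (f4 r.2.2.1 * f5 r.2.2.2)) :=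
        h5
    _ = (∑ x, f1 x) * ((∑ x, f2 x) * ∑ r : X3 × X4 × X5, f3 r.1 * (f4 r.2.1 * f5 r.2.2)) := by
        rw [h4]
    _ = (∑ x, f1 x) * ((∑ x, f2 x) * ((∑ x, f3 x) * ∑ r : X4 × X5, f4 r.1 * f5 r.2)) := by
        rw [h3]
    _ = (∑ x, f1 x) * (∑ x, f2 x) * (∑ x, f3 x) * (∑ x, f4 x) * (∑ x, f5 x) := by
        rw [h2]; ring

lemma inj_of_card_mul {G : Type*} [Group G] [DecidableEq G] {S U : Finset G}
    (h : (S⁻¹ * U).card = S.card * U.card) :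
    ∀ s ∈ S, ∀ u ∈ U, ∀ x ∈ S, ∀ y ∈ U, s⁻¹ * u = x⁻¹ * y → s = x ∧ u = y := by
  have h' : (S⁻¹ * U).card = S⁻¹.card * U.card := by rw [Finset.card_inv]; exact h
  have hinj := Finset.card_mul_iff.mp h'
  intro s hs u hu x hx y hy heq
  have h1 : ((s⁻¹, u) : G × G) ∈ (↑S⁻¹ ×ˢ ↑U : Set (G × G)) :=
    ⟨by simpa using hs, hu⟩
  have h2 : ((x⁻¹, y) : G × G) ∈ (↑S⁻¹ ×ˢ ↑U : Set (G × G)) :=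
    ⟨by simpa using hx, hy⟩
  have := hinj h1 h2 heq
  have e1 : s⁻¹ = x⁻¹ := congrArg Prod.fst this
  have e2 : u = y := congrArg Prod.snd this
  exact ⟨inv_injective e1, e2⟩

/-- The weight attached to a quadruple `q = (s,t,t',u)` in the error expansion. -/
noncomputable def wfun {G : Type*} {S T U : Finset G}
    (ω : ({x // x ∈ S} × {x // x ∈ T} → Bool) × ({x // x ∈ T} × {x // x ∈ U} → Bool) ×
        ({x // x ∈ S} → Bool) × ({x // x ∈ U} → Bool) × ({x // x ∈ T} → Bool))
    (x : {x // x ∈ S}) (y : {x // x ∈ U})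
    (q : {x // x ∈ S} × {x // x ∈ T} × {x // x ∈ T} × {x // x ∈ U}) : ℝ :=
  sgn (ω.2.2.1 x) * sgn (ω.2.2.2.1 y) *
    ((sgn (ω.2.2.1 q.1) * sgn (ω.2.2.2.2 q.2.1) * sgn (ω.1 (q.1, q.2.1))) *
     (sgn (ω.2.2.2.2 q.2.2.1) * sgn (ω.2.2.2.1 q.2.2.2) * sgn (ω.2.1 (q.2.2.1, q.2.2.2))))

lemma orth_lemma {G : Type*} [DecidableEq G] {S T U : Finset G}
    (x : {x // x ∈ S}) (y : {x // x ∈ U})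
    (q q' : {x // x ∈ S} × {x // x ∈ T} × {x // x ∈ T} × {x // x ∈ U}) :
    ∑ ω : ({x // x ∈ S} × {x // x ∈ T} → Bool) × ({x // x ∈ T} × {x // x ∈ U} → Bool) ×
        ({x // x ∈ S} → Bool) × ({x // x ∈ U} → Bool) × ({x // x ∈ T} → Bool),
      wfun ω x y q * wfun ω x y q'
      = if q = q' then (Fintype.card ((({x // x ∈ S} × {x // x ∈ T} → Bool) ×
          ({x // x ∈ T} × {x // x ∈ U} → Bool) × ({x // x ∈ S} → Bool) ×
          ({x // x ∈ U} → Bool) × ({x // x ∈ T} → Bool))) : ℝ) else 0 := by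
  by_cases hqq : q = q'
  · subst hqq
    rw [if_pos rfl]
    have h1 : ∀ ω : ({x // x ∈ S} × {x // x ∈ T} → Bool) ×
        ({x // x ∈ T} × {x // x ∈ U} → Bool) × ({x // x ∈ S} → Bool) ×
        ({x // x ∈ U} → Bool) × ({x // x ∈ T} → Bool),
        wfun ω x y q * wfun ω x y q = 1 := by
      intro ω
      have e8 : ∀ a b c d e f g h : ℝ,
          (a * b * ((c * d * e) * (f * g * h))) * (a * b * ((c * d * e) * (f * g * h)))
          = (a*a) * ((b*b) * ((c*c) * ((d*d) * ((e*e) * ((f*f) * ((g*g) * (h*h))))))) := by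
        intros; ring
      unfold wfun
      rw [e8, sgn_mul_self, sgn_mul_self, sgn_mul_self, sgn_mul_self, sgn_mul_self,
        sgn_mul_self, sgn_mul_self, sgn_mul_self]
      norm_num
    rw [Finset.sum_congr rfl (fun ω _ => h1 ω), Finset.sum_const, Finset.card_univ,
      nsmul_eq_mul, mul_one]
  · rw [if_neg hqq]
    obtain ⟨s, t, t', u⟩ := q
    obtain ⟨s₁, t₁, t₁', u₁⟩ := q'
    have hfact : ∀ ω : ({x // x ∈ S} × {x // x ∈ T} → Bool) ×
        ({x // x ∈ T} × {x // x ∈ U} → Bool) × ({x // x ∈ S} → Bool) ×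
        ({x // x ∈ U} → Bool) × ({x // x ∈ T} → Bool),
        wfun ω x y (s, t, t', u) * wfun ω x y (s₁, t₁, t₁', u₁)
        = (fun A : {x // x ∈ S} × {x // x ∈ T} → Bool =>
            sgn (A (s, t)) * sgn (A (s₁, t₁))) ω.1 *
          (fun B : {x // x ∈ T} × {x // x ∈ U} → Bool =>
            sgn (B (t', u)) * sgn (B (t₁', u₁))) ω.2.1 *
          (fun α : {x // x ∈ S} → Bool =>
            sgn (α x) * sgn (α x) * (sgn (α s) * sgn (α s₁))) ω.2.2.1 *
          (fun β : {x // x ∈ U} → Bool =>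
            sgn (β y) * sgn (β y) * (sgn (β u) * sgn (β u₁))) ω.2.2.2.1 *
          (fun γ : {x // x ∈ T} → Bool =>
            sgn (γ t) * sgn (γ t₁) * (sgn (γ t') * sgn (γ t₁'))) ω.2.2.2.2 := by
      intro ω; unfold wfun; dsimp only; ring
    have hfub := fubini5
      (fun A : {x // x ∈ S} × {x // x ∈ T} → Bool => sgn (A (s, t)) * sgn (A (s₁, t₁)))
      (fun B : {x // x ∈ T} × {x // x ∈ U} → Bool => sgn (B (t', u)) * sgn (B (t₁', u₁)))
      (fun α : {x // x ∈ S} → Bool => sgn (α x) * sgn (α x) * (sgn (α s) * sgn (α s₁)))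
      (fun β : {x // x ∈ U} → Bool => sgn (β y) * sgn (β y) * (sgn (β u) * sgn (β u₁)))
      (fun γ : {x // x ∈ T} → Bool => sgn (γ t) * sgn (γ t₁) * (sgn (γ t') * sgn (γ t₁')))
    rw [Finset.sum_congr rfl (fun ω _ => hfact ω), hfub]
    have hsplit : (s, t) ≠ (s₁, t₁) ∨ (t', u) ≠ (t₁', u₁) := by
      by_contra hcon
      push_neg at hcon
      obtain ⟨h1, h2⟩ := hcon
      apply hqq
      simp only [Prod.mk.injEq] at h1 h2 ⊢
      exact ⟨h1.1, h1.2, h2.1, h2.2⟩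
    rcases hsplit with h | h
    · rw [sum_sgn_pair h]; ring
    · rw [sum_sgn_pair h]; ring

lemma orth2 {G : Type*} [DecidableEq G] {S T U : Finset G}
    (x : {x // x ∈ S}) (y : {x // x ∈ U})
    (F : Finset ({x // x ∈ S} × {x // x ∈ T} × {x // x ∈ T} × {x // x ∈ U})) :
    ∑ ω : ({x // x ∈ S} × {x // x ∈ T} → Bool) × ({x // x ∈ T} × {x // x ∈ U} → Bool) ×
        ({x // x ∈ S} → Bool) × ({x // x ∈ U} → Bool) × ({x // x ∈ T} → Bool),
      (∑ q ∈ F, wfun ω x y q) ^ 2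
      = (Fintype.card ((({x // x ∈ S} × {x // x ∈ T} → Bool) ×
          ({x // x ∈ T} × {x // x ∈ U} → Bool) × ({x // x ∈ S} → Bool) ×
          ({x // x ∈ U} → Bool) × ({x // x ∈ T} → Bool))) : ℝ) * F.card := by
  have step : ∀ ω : ({x // x ∈ S} × {x // x ∈ T} → Bool) ×
      ({x // x ∈ T} × {x // x ∈ U} → Bool) × ({x // x ∈ S} → Bool) ×
      ({x // x ∈ U} → Bool) × ({x // x ∈ T} → Bool),
      (∑ q ∈ F, wfun ω x y q) ^ 2 = ∑ q ∈ F, ∑ q' ∈ F, wfun ω x y q * wfun ω x y q' := by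
    intro ω; rw [sq, Finset.sum_mul_sum]
  rw [Finset.sum_congr rfl (fun ω _ => step ω)]
  rw [Finset.sum_comm]
  have inner : ∀ q ∈ F,
      (∑ ω : ({x // x ∈ S} × {x // x ∈ T} → Bool) × ({x // x ∈ T} × {x // x ∈ U} → Bool) ×
        ({x // x ∈ S} → Bool) × ({x // x ∈ U} → Bool) × ({x // x ∈ T} → Bool),
        ∑ q' ∈ F, wfun ω x y q * wfun ω x y q')
      = (Fintype.card ((({x // x ∈ S} × {x // x ∈ T} → Bool) ×
          ({x // x ∈ T} × {x // x ∈ U} → Bool) × ({x // x ∈ S} → Bool) ×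
          ({x // x ∈ U} → Bool) × ({x // x ∈ T} → Bool))) : ℝ) := by
    intro q hq
    rw [Finset.sum_comm]
    have : ∀ q' ∈ F,
        (∑ ω : ({x // x ∈ S} × {x // x ∈ T} → Bool) × ({x // x ∈ T} × {x // x ∈ U} → Bool) ×
          ({x // x ∈ S} → Bool) × ({x // x ∈ U} → Bool) × ({x // x ∈ T} → Bool),
          wfun ω x y q * wfun ω x y q')
        = if q = q' then (Fintype.card ((({x // x ∈ S} × {x // x ∈ T} → Bool) ×
            ({x // x ∈ T} × {x // x ∈ U} → Bool) × ({x // x ∈ S} → Bool) ×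
            ({x // x ∈ U} → Bool) × ({x // x ∈ T} → Bool))) : ℝ) else 0 :=
      fun q' _ => orth_lemma x y q q'
    rw [Finset.sum_congr rfl this, Finset.sum_ite_eq F q, if_pos hq]
  rw [Finset.sum_congr rfl inner, Finset.sum_const, nsmul_eq_mul]
  ring

set_option maxHeartbeats 1600000 in
theorem statement2 {G : Type*} [Group G] [Fintype G] [DecidableEq G]
    (n : ℕ) (hn : 1 ≤ n) (S T U : Finset G)
    (hSc : S.card = n) (hTc : T.card = n) (hUc : U.card = n)
    (hST : (S⁻¹ * T).card = n ^ 2) (hTU : (T⁻¹ * U).card = n ^ 2)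
    (hSU : (S⁻¹ * U).card = n ^ 2)
    -- the `a`-signal, `b`-signal, convolution and output, as functions of the sample
    (a : (({x // x ∈ S} × {x // x ∈ T} → Bool) × ({x // x ∈ T} × {x // x ∈ U} → Bool) ×
        ({x // x ∈ S} → Bool) × ({x // x ∈ U} → Bool) × ({x // x ∈ T} → Bool)) → G → ℝ)
    (b : (({x // x ∈ S} × {x // x ∈ T} → Bool) × ({x // x ∈ T} × {x // x ∈ U} → Bool) ×
        ({x // x ∈ S} → Bool) × ({x // x ∈ U} → Bool) × ({x // x ∈ T} → Bool)) → G → ℝ)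
    (c : (({x // x ∈ S} × {x // x ∈ T} → Bool) × ({x // x ∈ T} × {x // x ∈ U} → Bool) ×
        ({x // x ∈ S} → Bool) × ({x // x ∈ U} → Bool) × ({x // x ∈ T} → Bool)) → G → ℝ)
    (C : (({x // x ∈ S} × {x // x ∈ T} → Bool) × ({x // x ∈ T} × {x // x ∈ U} → Bool) ×
        ({x // x ∈ S} → Bool) × ({x // x ∈ U} → Bool) × ({x // x ∈ T} → Bool)) →
        {x // x ∈ S} → {x // x ∈ U} → ℝ)
    (ha : ∀ ω g, a ω g = ∑ s : {x // x ∈ S}, ∑ t : {x // x ∈ T},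
      if (s : G)⁻¹ * (t : G) = g
        then sgn (ω.2.2.1 s) * sgn (ω.2.2.2.2 t) * sgn (ω.1 (s, t)) else 0)
    (hb : ∀ ω g, b ω g = ∑ t : {x // x ∈ T}, ∑ u : {x // x ∈ U},
      if (t : G)⁻¹ * (u : G) = g
        then sgn (ω.2.2.2.2 t) * sgn (ω.2.2.2.1 u) * sgn (ω.2.1 (t, u)) else 0)
    (hc : ∀ ω g, c ω g = ∑ h : G, a ω h * b ω (h⁻¹ * g))
    (hC : ∀ ω x y, C ω x y =
      sgn (ω.2.2.1 x) * sgn (ω.2.2.2.1 y) * c ω ((x : G)⁻¹ * (y : G)))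
    -- the expected squared Frobenius error
    (E : ℝ)
    (hE : E = (∑ ω : (({x // x ∈ S} × {x // x ∈ T} → Bool) ×
          ({x // x ∈ T} × {x // x ∈ U} → Bool) × ({x // x ∈ S} → Bool) ×
          ({x // x ∈ U} → Bool) × ({x // x ∈ T} → Bool)),
        ∑ x : {x // x ∈ S}, ∑ y : {x // x ∈ U},
          (C ω x y - ∑ t : {x // x ∈ T}, sgn (ω.1 (x, t)) * sgn (ω.2.1 (t, y))) ^ 2)
      / (Fintype.card ((({x // x ∈ S} × {x // x ∈ T} → Bool) ×
          ({x // x ∈ T} × {x // x ∈ U} → Bool) × ({x // x ∈ S} → Bool) ×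
          ({x // x ∈ U} → Bool) × ({x // x ∈ T} → Bool))) : ℝ))
    -- the approximate triple product quantity
    (ρ : ℕ)
    (hρ : ρ = ((S ×ˢ S ×ˢ T ×ˢ T ×ˢ U ×ˢ U).filter
        (fun p : G × G × G × G × G × G =>
          p.1 * p.2.1⁻¹ * p.2.2.1 * p.2.2.2.1⁻¹ = p.2.2.2.2.1 * p.2.2.2.2.2⁻¹)).card) :
    E = (∑ x : {x // x ∈ S}, ∑ y : {x // x ∈ U},
        ((Finset.univ.filter
            (fun q : {x // x ∈ S} × {x // x ∈ T} × {x // x ∈ T} × {x // x ∈ U} =>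
              q.2.1 ≠ q.2.2.1 ∧
                (q.1 : G)⁻¹ * (q.2.1 : G) * (q.2.2.1 : G)⁻¹ * (q.2.2.2 : G) =
                  (x : G)⁻¹ * (y : G))).card : ℝ)) ∧
    (ρ : ℝ) - (n : ℝ) ^ 3 ≤
      (∑ x : {x // x ∈ S}, ∑ y : {x // x ∈ U},
        ((Finset.univ.filter
            (fun q : {x // x ∈ S} × {x // x ∈ T} × {x // x ∈ T} × {x // x ∈ U} =>
              q.2.1 ≠ q.2.2.1 ∧
                (q.1 : G)⁻¹ * (q.2.1 : G) * (q.2.2.1 : G)⁻¹ * (q.2.2.2 : G) =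
                  (x : G)⁻¹ * (y : G))).card : ℝ)) ∧
    ∀ ω : (({x // x ∈ S} × {x // x ∈ T} → Bool) × ({x // x ∈ T} × {x // x ∈ U} → Bool) ×
        ({x // x ∈ S} → Bool) × ({x // x ∈ U} → Bool) × ({x // x ∈ T} → Bool)),
      ((ρ : ℝ) - (n : ℝ) ^ 3) / (n : ℝ) ^ 4 ≤
        E / ((∑ s : {x // x ∈ S}, ∑ t : {x // x ∈ T}, sgn (ω.1 (s, t)) ^ 2) *
          (∑ t : {x // x ∈ T}, ∑ u : {x // x ∈ U}, sgn (ω.2.1 (t, u)) ^ 2)) := by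
  have hinjSU : ∀ s ∈ S, ∀ u ∈ U, ∀ x ∈ S, ∀ y ∈ U, s⁻¹ * u = x⁻¹ * y → s = x ∧ u = y :=
    inj_of_card_mul (by rw [hSU, hSc, hUc]; ring)
  -- Step A: exact expansion of the pointwise error.
  have key : ∀ (ω : (({x // x ∈ S} × {x // x ∈ T} → Bool) ×
      ({x // x ∈ T} × {x // x ∈ U} → Bool) × ({x // x ∈ S} → Bool) ×
      ({x // x ∈ U} → Bool) × ({x // x ∈ T} → Bool)))
      (x : {x // x ∈ S}) (y : {x // x ∈ U}),
      C ω x y - (∑ t : {x // x ∈ T}, sgn (ω.1 (x, t)) * sgn (ω.2.1 (t, y)))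
        = ∑ q ∈ Finset.univ.filter
            (fun q : {x // x ∈ S} × {x // x ∈ T} × {x // x ∈ T} × {x // x ∈ U} =>
              q.2.1 ≠ q.2.2.1 ∧
                (q.1 : G)⁻¹ * (q.2.1 : G) * (q.2.2.1 : G)⁻¹ * (q.2.2.2 : G) =
                  (x : G)⁻¹ * (y : G)),
          wfun ω x y q := by
    intro ω x y
    have hcexp : c ω ((x : G)⁻¹ * (y : G)) = ∑ s : {x // x ∈ S}, ∑ t : {x // x ∈ T},
        ∑ t' : {x // x ∈ T}, ∑ u : {x // x ∈ U},
        if (s : G)⁻¹ * (t : G) * (t' : G)⁻¹ * (u : G) = (x : G)⁻¹ * (y : G)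
        then (sgn (ω.2.2.1 s) * sgn (ω.2.2.2.2 t) * sgn (ω.1 (s, t))) *
             (sgn (ω.2.2.2.2 t') * sgn (ω.2.2.2.1 u) * sgn (ω.2.1 (t', u))) else 0 := by
      rw [hc]
      simp only [ha, Finset.sum_mul, ite_mul, zero_mul]
      rw [Finset.sum_comm]
      refine Finset.sum_congr rfl fun s _ => ?_
      rw [Finset.sum_comm]
      refine Finset.sum_congr rfl fun t _ => ?_
      rw [Finset.sum_ite_eq]
      simp only [Finset.mem_univ, if_true]
      simp only [hb, Finset.mul_sum, mul_ite, mul_zero]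
      refine Finset.sum_congr rfl fun t' _ => ?_
      refine Finset.sum_congr rfl fun u _ => ?_
      refine if_congr ?_ rfl rfl
      constructor
      · intro hh
        calc (s : G)⁻¹ * t * (t' : G)⁻¹ * u = (s : G)⁻¹ * (t : G) * ((t' : G)⁻¹ * u) := by
              group
          _ = (s : G)⁻¹ * (t : G) * (((s : G)⁻¹ * (t : G))⁻¹ * ((x : G)⁻¹ * (y : G))) := by
              rw [hh]
          _ = (x : G)⁻¹ * (y : G) := by group
      · intro hh
        rw [← hh]; group
    rw [hC, hcexp]
    simp only [Finset.mul_sum, mul_ite, mul_zero]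
    have hsplit : ∀ (s : {x // x ∈ S}) (t : {x // x ∈ T}) (t' : {x // x ∈ T})
        (u : {x // x ∈ U}),
        (if (s : G)⁻¹ * (t : G) * (t' : G)⁻¹ * (u : G) = (x : G)⁻¹ * (y : G)
          then sgn (ω.2.2.1 x) * sgn (ω.2.2.2.1 y) *
            ((sgn (ω.2.2.1 s) * sgn (ω.2.2.2.2 t) * sgn (ω.1 (s, t))) *
             (sgn (ω.2.2.2.2 t') * sgn (ω.2.2.2.1 u) * sgn (ω.2.1 (t', u)))) else 0)
        = (if t ≠ t' ∧ (s : G)⁻¹ * (t : G) * (t' : G)⁻¹ * (u : G) = (x : G)⁻¹ * (y : G)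
            then sgn (ω.2.2.1 x) * sgn (ω.2.2.2.1 y) *
              ((sgn (ω.2.2.1 s) * sgn (ω.2.2.2.2 t) * sgn (ω.1 (s, t))) *
               (sgn (ω.2.2.2.2 t') * sgn (ω.2.2.2.1 u) * sgn (ω.2.1 (t', u)))) else 0)
          + (if u = y ∧ t' = t ∧ s = x
              then sgn (ω.2.2.1 x) * sgn (ω.2.2.2.1 y) *
                ((sgn (ω.2.2.1 s) * sgn (ω.2.2.2.2 t) * sgn (ω.1 (s, t))) *
                 (sgn (ω.2.2.2.2 t') * sgn (ω.2.2.2.1 u) * sgn (ω.2.1 (t', u)))) else 0) := by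
      intro s t t' u
      by_cases h1 : (s : G)⁻¹ * (t : G) * (t' : G)⁻¹ * (u : G) = (x : G)⁻¹ * (y : G)
      · by_cases h2 : t = t'
        · subst h2
          have hsu : (s : G)⁻¹ * (u : G) = (x : G)⁻¹ * (y : G) := by rw [← h1]; group
          obtain ⟨es, eu⟩ := hinjSU (s : G) s.2 (u : G) u.2 (x : G) x.2 (y : G) y.2 hsu
          rw [if_pos h1, if_neg (fun hcon => hcon.1 rfl),
            if_pos ⟨Subtype.ext eu, rfl, Subtype.ext es⟩]
          ring
        · rw [if_pos h1, if_pos ⟨h2, h1⟩, if_neg (fun hcon => h2 hcon.2.1.symm)]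
          ring
      · have hno : ¬(u = y ∧ t' = t ∧ s = x) := by
          rintro ⟨hu, ht, hs⟩
          apply h1
          rw [hu, ht, hs]; group
        rw [if_neg h1, if_neg (fun hcon => h1 hcon.2), if_neg hno]
        ring
    rw [Finset.sum_congr rfl (fun s _ => Finset.sum_congr rfl (fun t _ =>
      Finset.sum_congr rfl (fun t' _ => Finset.sum_congr rfl (fun u _ => hsplit s t t' u))))]
    simp only [Finset.sum_add_distrib]
    have hdiag : (∑ s : {x // x ∈ S}, ∑ t : {x // x ∈ T}, ∑ t' : {x // x ∈ T},
        ∑ u : {x // x ∈ U},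
        if u = y ∧ t' = t ∧ s = x
          then sgn (ω.2.2.1 x) * sgn (ω.2.2.2.1 y) *
            ((sgn (ω.2.2.1 s) * sgn (ω.2.2.2.2 t) * sgn (ω.1 (s, t))) *
             (sgn (ω.2.2.2.2 t') * sgn (ω.2.2.2.1 u) * sgn (ω.2.1 (t', u)))) else 0)
        = ∑ t : {x // x ∈ T}, sgn (ω.1 (x, t)) * sgn (ω.2.1 (t, y)) := by
      rw [Finset.sum_comm]
      simp only [ite_and, Finset.sum_ite_eq', Finset.mem_univ, if_true]
      refine Finset.sum_congr rfl fun t _ => ?_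
      have e5 : ∀ p q r v z : ℝ, p * q * ((p * r * v) * (r * q * z))
          = (p * p) * ((q * q) * ((r * r) * (v * z))) := by intros; ring
      rw [e5, sgn_mul_self, sgn_mul_self, sgn_mul_self]
      ring
    have hne : (∑ s : {x // x ∈ S}, ∑ t : {x // x ∈ T}, ∑ t' : {x // x ∈ T},
        ∑ u : {x // x ∈ U},
        if t ≠ t' ∧ (s : G)⁻¹ * (t : G) * (t' : G)⁻¹ * (u : G) = (x : G)⁻¹ * (y : G)
          then sgn (ω.2.2.1 x) * sgn (ω.2.2.2.1 y) *
            ((sgn (ω.2.2.1 s) * sgn (ω.2.2.2.2 t) * sgn (ω.1 (s, t))) *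
             (sgn (ω.2.2.2.2 t') * sgn (ω.2.2.2.1 u) * sgn (ω.2.1 (t', u)))) else 0)
        = ∑ q ∈ Finset.univ.filter
            (fun q : {x // x ∈ S} × {x // x ∈ T} × {x // x ∈ T} × {x // x ∈ U} =>
              q.2.1 ≠ q.2.2.1 ∧
                (q.1 : G)⁻¹ * (q.2.1 : G) * (q.2.2.1 : G)⁻¹ * (q.2.2.2 : G) =
                  (x : G)⁻¹ * (y : G)),
          wfun ω x y q := by
      rw [Finset.sum_filter]
      simp only [Fintype.sum_prod_type, wfun]
    rw [hdiag, hne]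
    ring
  -- E computation
  have hEcomp : E = ∑ x : {x // x ∈ S}, ∑ y : {x // x ∈ U},
      ((Finset.univ.filter
          (fun q : {x // x ∈ S} × {x // x ∈ T} × {x // x ∈ T} × {x // x ∈ U} =>
            q.2.1 ≠ q.2.2.1 ∧
              (q.1 : G)⁻¹ * (q.2.1 : G) * (q.2.2.1 : G)⁻¹ * (q.2.2.2 : G) =
                (x : G)⁻¹ * (y : G))).card : ℝ) := by
    rw [hE]
    have swapped : (∑ ω : (({x // x ∈ S} × {x // x ∈ T} → Bool) ×
          ({x // x ∈ T} × {x // x ∈ U} → Bool) × ({x // x ∈ S} → Bool) ×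
          ({x // x ∈ U} → Bool) × ({x // x ∈ T} → Bool)),
        ∑ x : {x // x ∈ S}, ∑ y : {x // x ∈ U},
          (C ω x y - ∑ t : {x // x ∈ T}, sgn (ω.1 (x, t)) * sgn (ω.2.1 (t, y))) ^ 2)
        = ∑ x : {x // x ∈ S}, ∑ y : {x // x ∈ U},
          ∑ ω : (({x // x ∈ S} × {x // x ∈ T} → Bool) ×
            ({x // x ∈ T} × {x // x ∈ U} → Bool) × ({x // x ∈ S} → Bool) ×
            ({x // x ∈ U} → Bool) × ({x // x ∈ T} → Bool)),
          (C ω x y - ∑ t : {x // x ∈ T}, sgn (ω.1 (x, t)) * sgn (ω.2.1 (t, y))) ^ 2 := by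
      rw [Finset.sum_comm]
      exact Finset.sum_congr rfl fun x _ => Finset.sum_comm
    rw [swapped]
    have inner : ∀ (x : {x // x ∈ S}) (y : {x // x ∈ U}),
        (∑ ω : (({x // x ∈ S} × {x // x ∈ T} → Bool) ×
          ({x // x ∈ T} × {x // x ∈ U} → Bool) × ({x // x ∈ S} → Bool) ×
          ({x // x ∈ U} → Bool) × ({x // x ∈ T} → Bool)),
          (C ω x y - ∑ t : {x // x ∈ T}, sgn (ω.1 (x, t)) * sgn (ω.2.1 (t, y))) ^ 2)
        = (Fintype.card ((({x // x ∈ S} × {x // x ∈ T} → Bool) ×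
            ({x // x ∈ T} × {x // x ∈ U} → Bool) × ({x // x ∈ S} → Bool) ×
            ({x // x ∈ U} → Bool) × ({x // x ∈ T} → Bool))) : ℝ) *
          ((Finset.univ.filter
            (fun q : {x // x ∈ S} × {x // x ∈ T} × {x // x ∈ T} × {x // x ∈ U} =>
              q.2.1 ≠ q.2.2.1 ∧
                (q.1 : G)⁻¹ * (q.2.1 : G) * (q.2.2.1 : G)⁻¹ * (q.2.2.2 : G) =
                  (x : G)⁻¹ * (y : G))).card : ℝ) := by
      intro x y
      rw [Finset.sum_congr rfl (fun ω _ => congrArg (· ^ 2) (key ω x y))]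
      exact orth2 x y _
    rw [Finset.sum_congr rfl fun x _ => Finset.sum_congr rfl fun y _ => inner x y]
    simp only [← Finset.mul_sum]
    exact mul_div_cancel_left₀ _ (Nat.cast_ne_zero.mpr Fintype.card_ne_zero)
  -- the counting identity
  have hM : ρ = n ^ 3 + ∑ x : {x // x ∈ S}, ∑ y : {x // x ∈ U},
      (Finset.univ.filter
        (fun q : {x // x ∈ S} × {x // x ∈ T} × {x // x ∈ T} × {x // x ∈ U} =>
          q.2.1 ≠ q.2.2.1 ∧
            (q.1 : G)⁻¹ * (q.2.1 : G) * (q.2.2.1 : G)⁻¹ * (q.2.2.2 : G) =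
              (x : G)⁻¹ * (y : G))).card := by
    rw [hρ, ← Finset.card_filter_add_card_filter_not
      (p := fun p : G × G × G × G × G × G => p.2.2.1 = p.2.2.2.1)]
    congr 1
    · -- diagonal part has exactly n^3 elements
      have hbij : (S ×ˢ T ×ˢ U).card = (((S ×ˢ S ×ˢ T ×ˢ T ×ˢ U ×ˢ U).filter
          (fun p : G × G × G × G × G × G =>
            p.1 * p.2.1⁻¹ * p.2.2.1 * p.2.2.2.1⁻¹ = p.2.2.2.2.1 * p.2.2.2.2.2⁻¹)).filter
          (fun p => p.2.2.1 = p.2.2.2.1)).card := by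
        refine Finset.card_bij (fun p _ => (p.1, p.1, p.2.1, p.2.1, p.2.2, p.2.2)) ?_ ?_ ?_
        · intro p hp
          simp only [Finset.mem_product, Finset.mem_filter] at hp ⊢
          obtain ⟨h1, h2, h3⟩ := hp
          exact ⟨⟨⟨h1, h1, h2, h2, h3, h3⟩, by group⟩, trivial⟩
        · rintro ⟨a1, b1, c1⟩ _ ⟨a2, b2, c2⟩ _ heq
          simp only [Prod.mk.injEq] at heq ⊢
          exact ⟨heq.1, heq.2.2.1, heq.2.2.2.2.1⟩
        · rintro ⟨s₁, s₂, t₁, t₂, u₁, u₂⟩ hr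
          simp only [Finset.mem_filter, Finset.mem_product] at hr
          obtain ⟨⟨⟨hs1, hs2, ht1, ht2, hu1, hu2⟩, hcond⟩, heqt⟩ := hr
          subst heqt
          have hss : s₁ * s₂⁻¹ = u₁ * u₂⁻¹ := by rw [← hcond]; group
          have h' : s₂⁻¹ * u₂ = s₁⁻¹ * u₁ := by
            calc s₂⁻¹ * u₂ = s₁⁻¹ * (s₁ * s₂⁻¹) * u₂ := by group
              _ = s₁⁻¹ * (u₁ * u₂⁻¹) * u₂ := by rw [hss]
              _ = s₁⁻¹ * u₁ := by group
          obtain ⟨es, eu⟩ := hinjSU s₂ hs2 u₂ hu2 s₁ hs1 u₁ hu1 h'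
          refine ⟨(s₁, t₁, u₁), ?_, ?_⟩
          · simp only [Finset.mem_product]
            exact ⟨hs1, ht1, hu1⟩
          · simp [es, eu]
      rw [← hbij]
      simp only [Finset.card_product, hSc, hTc, hUc]
      ring
    · -- off-diagonal part
      have hQ : (∑ x : {x // x ∈ S}, ∑ y : {x // x ∈ U},
          (Finset.univ.filter
            (fun q : {x // x ∈ S} × {x // x ∈ T} × {x // x ∈ T} × {x // x ∈ U} =>
              q.2.1 ≠ q.2.2.1 ∧
                (q.1 : G)⁻¹ * (q.2.1 : G) * (q.2.2.1 : G)⁻¹ * (q.2.2.2 : G) =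
                  (x : G)⁻¹ * (y : G))).card)
          = ((Finset.univ : Finset ({x // x ∈ S} × {x // x ∈ U} ×
              ({x // x ∈ S} × {x // x ∈ T} × {x // x ∈ T} × {x // x ∈ U}))).filter
            (fun r => r.2.2.2.1 ≠ r.2.2.2.2.1 ∧
              (r.2.2.1 : G)⁻¹ * (r.2.2.2.1 : G) * (r.2.2.2.2.1 : G)⁻¹ * (r.2.2.2.2.2 : G)
                = (r.1 : G)⁻¹ * (r.2.1 : G))).card := by
        simp only [Finset.card_filter, Fintype.sum_prod_type]
      rw [hQ]
      refine (Finset.card_bij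
        (fun (r : {x // x ∈ S} × {x // x ∈ U} ×
            ({x // x ∈ S} × {x // x ∈ T} × {x // x ∈ T} × {x // x ∈ U})) _ =>
          ((r.1 : G), (r.2.2.1 : G), (r.2.2.2.1 : G), (r.2.2.2.2.1 : G), (r.2.1 : G),
            (r.2.2.2.2.2 : G))) ?_ ?_ ?_).symm
      · intro r hr
        simp only [Finset.mem_filter, Finset.mem_univ, true_and] at hr
        obtain ⟨hne, hcond⟩ := hr
        simp only [Finset.mem_filter, Finset.mem_product]
        refine ⟨⟨⟨r.1.2, r.2.2.1.2, r.2.2.2.1.2, r.2.2.2.2.1.2, r.2.1.2, r.2.2.2.2.2.2⟩, ?_⟩, ?_⟩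
        · calc (r.1 : G) * (r.2.2.1 : G)⁻¹ * (r.2.2.2.1 : G) * (r.2.2.2.2.1 : G)⁻¹
              = (r.1 : G) * ((r.2.2.1 : G)⁻¹ * (r.2.2.2.1 : G) * (r.2.2.2.2.1 : G)⁻¹ *
                  (r.2.2.2.2.2 : G)) * (r.2.2.2.2.2 : G)⁻¹ := by group
            _ = (r.1 : G) * ((r.1 : G)⁻¹ * (r.2.1 : G)) * (r.2.2.2.2.2 : G)⁻¹ := by rw [hcond]
            _ = (r.2.1 : G) * (r.2.2.2.2.2 : G)⁻¹ := by group
        · exact fun hc => hne (Subtype.ext hc)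
      · rintro ⟨x1, y1, s1, t1, t1', u1⟩ _ ⟨x2, y2, s2, t2, t2', u2⟩ _ heq
        simp only [Prod.mk.injEq] at heq ⊢
        obtain ⟨e1, e2, e3, e4, e5, e6⟩ := heq
        exact ⟨Subtype.ext e1, Subtype.ext e5, Subtype.ext e2, Subtype.ext e3,
          Subtype.ext e4, Subtype.ext e6⟩
      · rintro ⟨s₁, s₂, t₁, t₂, u₁, u₂⟩ hp
        simp only [Finset.mem_filter, Finset.mem_product] at hp
        obtain ⟨⟨⟨hs1, hs2, ht1, ht2, hu1, hu2⟩, hcond⟩, hne⟩ := hp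
        refine ⟨(⟨s₁, hs1⟩, ⟨u₁, hu1⟩, ⟨s₂, hs2⟩, ⟨t₁, ht1⟩, ⟨t₂, ht2⟩, ⟨u₂, hu2⟩), ?_, rfl⟩
        simp only [Finset.mem_filter, Finset.mem_univ, true_and]
        constructor
        · exact fun hc => hne (congrArg Subtype.val hc)
        · calc s₂⁻¹ * t₁ * t₂⁻¹ * u₂ = s₁⁻¹ * (s₁ * s₂⁻¹ * t₁ * t₂⁻¹) * u₂ := by group
            _ = s₁⁻¹ * (u₁ * u₂⁻¹) * u₂ := by rw [hcond]
            _ = s₁⁻¹ * u₁ := by group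
  have hle : (ρ : ℝ) - (n : ℝ) ^ 3 ≤ ∑ x : {x // x ∈ S}, ∑ y : {x // x ∈ U},
      ((Finset.univ.filter
          (fun q : {x // x ∈ S} × {x // x ∈ T} × {x // x ∈ T} × {x // x ∈ U} =>
            q.2.1 ≠ q.2.2.1 ∧
              (q.1 : G)⁻¹ * (q.2.1 : G) * (q.2.2.1 : G)⁻¹ * (q.2.2.2 : G) =
                (x : G)⁻¹ * (y : G))).card : ℝ) := by
    have hcast : (ρ : ℝ) = (n : ℝ) ^ 3 + ∑ x : {x // x ∈ S}, ∑ y : {x // x ∈ U},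
        ((Finset.univ.filter
          (fun q : {x // x ∈ S} × {x // x ∈ T} × {x // x ∈ T} × {x // x ∈ U} =>
            q.2.1 ≠ q.2.2.1 ∧
              (q.1 : G)⁻¹ * (q.2.1 : G) * (q.2.2.1 : G)⁻¹ * (q.2.2.2 : G) =
                (x : G)⁻¹ * (y : G))).card : ℝ) := by
      rw [hM]; push_cast; ring
    linarith
  refine ⟨hEcomp, hle, ?_⟩
  intro ω
  have d1 : (∑ s : {x // x ∈ S}, ∑ t : {x // x ∈ T}, sgn (ω.1 (s, t)) ^ 2) = (n : ℝ) * n := by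
    simp only [sgn_sq, Finset.sum_const, Finset.card_univ, nsmul_eq_mul, mul_one,
      Fintype.card_coe, hSc, hTc]
  have d2 : (∑ t : {x // x ∈ T}, ∑ u : {x // x ∈ U}, sgn (ω.2.1 (t, u)) ^ 2)
      = (n : ℝ) * n := by
    simp only [sgn_sq, Finset.sum_const, Finset.card_univ, nsmul_eq_mul, mul_one,
      Fintype.card_coe, hTc, hUc]
  rw [d1, d2]
  have h4 : (n : ℝ) * n * ((n : ℝ) * n) = (n : ℝ) ^ 4 := by ring
  rw [h4]
  have hE' : (ρ : ℝ) - (n : ℝ) ^ 3 ≤ E := by rw [hEcomp]; exact hle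
  have hnp : (0 : ℝ) < (n : ℝ) := by exact_mod_cast Nat.lt_of_lt_of_le Nat.zero_lt_one hn
  exact div_le_div_of_nonneg_right hE' (by positivity)
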